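/- The example chain satisfies Assumption B̲ but not Assumption B: (a) for every n = 1,2,…, v_{γ^(n)}(0) − m_{γ^(n)} ≥ n, hence sup_{α∈[0,1)} (v_α(0) − m_α) = +∞; (b) for every state x of the chain, liminf_{α↑1} (v_α(x) − m_α) < +∞ (in particular v_{α^(n)}(0) − m_{α^(n)} ≤ 1 for all n). -/

import Mathlib

open Filter Topology

/-- `ε_β := 1 − β`. -/
noncomputable def epsP (β : ℝ) : ℝ := 1 - β

/-- `γ_{β,M} := max{(β+1)/2, 1 − ε_β/(3M)}`. -/
noncomputable def gammaP (β M : ℝ) : ℝ := max ((β + 1) / 2) (1 - epsP β / (3 * M))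

/-- `n*_{β,M} := ⌊log_{γ_{β,M}}(min{1/2, M(1−γ_{β,M})/ε_β})⌋ + 1`. -/
noncomputable def nStar (β M : ℝ) : ℕ :=
  (⌊Real.logb (gammaP β M) (min (1 / 2) (M * (1 - gammaP β M) / epsP β))⌋).toNat + 1

/-- `δ_{β,M} := max{(γ_{β,M}+1)/2, (1 − 1/(ε_β n*_{β,M}))^(1/n*_{β,M})}`. -/
noncomputable def deltaP (β M : ℝ) : ℝ :=
  max ((gammaP β M + 1) / 2)
    ((1 - 1 / (epsP β * (nStar β M : ℝ))) ^ ((1 : ℝ) / (nStar β M : ℝ)))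

/-- `g_{β,M}(α) := ε_β (1 − α^{n*_{β,M}})² / (1 − α)`. -/
noncomputable def gFun (β M α : ℝ) : ℝ := epsP β * (1 - α ^ nStar β M) ^ 2 / (1 - α)

/-- The sequence `α^(1), α^(2), …` of the example: `α^(n+1) := δ_{α^(n), n}`; here
`alphaSeq a1 n = α^(n+1)`, i.e. indices are shifted by one. -/
noncomputable def alphaSeq (a1 : ℝ) : ℕ → ℝ
  | 0 => a1
  | n + 1 => deltaP (alphaSeq a1 n) ((n : ℝ) + 1)

/-- `N(n) := n*_{α^(n), n}` of the example (meaningful for `n ≥ 1`). -/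
noncomputable def Nex (a1 : ℝ) (n : ℕ) : ℕ := nStar (alphaSeq a1 (n - 1)) (n : ℝ)

/-- `ε^(n) := ε_{α^(n)} = 1 − α^(n)` of the example (meaningful for `n ≥ 1`). -/
noncomputable def epsEx (a1 : ℝ) (n : ℕ) : ℝ := epsP (alphaSeq a1 (n - 1))

/-- The deterministic transitions of the example chain: `0 → 0`,
`(n,k) → (n,k+1)` for `k < 2N(n)`, and `(n,2N(n)) → 0`; the state `0` is `none`. -/
noncomputable def stepEx (a1 : ℝ) : Option (ℕ × ℕ) → Option (ℕ × ℕ)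
  | none => none
  | some (n, k) => if k < 2 * Nex a1 n then some (n, k + 1) else none

/-- The one-step costs of the example chain: `c(0) = 1`, `c(n,k) = 1 − ε^(n)` for
`k ≤ N(n)` and `c(n,k) = 1 + ε^(n)` for `N(n) < k ≤ 2N(n)`. -/
noncomputable def costEx (a1 : ℝ) : Option (ℕ × ℕ) → ℝ
  | none => 1
  | some (n, k) => if k ≤ Nex a1 n then 1 - epsEx a1 n else 1 + epsEx a1 n

/-- `v_α(x) := Σ_{t≥0} α^t c(x_t)`, the discounted value of the example chain
started at `x`. -/
noncomputable def vEx (a1 α : ℝ) (x : Option (ℕ × ℕ)) : ℝ :=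
  ∑' t : ℕ, α ^ t * costEx a1 ((stepEx a1)^[t] x)

/-- The genuine states of the example chain:
`{0} ∪ {(n,k) : n ≥ 1, 1 ≤ k ≤ 2N(n)}`. -/
def validEx (a1 : ℝ) : Set (Option (ℕ × ℕ)) :=
  {none} ∪ {s | ∃ n k : ℕ, 1 ≤ n ∧ 1 ≤ k ∧ k ≤ 2 * Nex a1 n ∧ s = some (n, k)}

/-- `m_α := inf_{x ∈ X} v_α(x)` over the states of the example chain. -/
noncomputable def mEx (a1 α : ℝ) : ℝ := sInf (vEx a1 α '' validEx a1)

section Helpers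

variable {β M : ℝ}

lemma eps_pos (hβ1 : β < 1) : 0 < epsP β := by simp only [epsP]; linarith

lemma eps_le_half (hβ2 : 1/2 ≤ β) : epsP β ≤ 1/2 := by simp only [epsP]; linarith

lemma gammaP_eq (hβ2 : 1/2 ≤ β) (hβ1 : β < 1) (hM : 1 ≤ M) :
    gammaP β M = 1 - epsP β / (3 * M) := by
  have hε : 0 ≤ epsP β := by simp only [epsP]; linarith
  have h2 : epsP β / (3 * M) ≤ epsP β / 2 := by gcongr; linarith
  rw [gammaP, max_eq_right]
  simp only [epsP] at h2 ⊢; linarith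

lemma one_sub_gammaP (hβ2 : 1/2 ≤ β) (hβ1 : β < 1) (hM : 1 ≤ M) :
    1 - gammaP β M = epsP β / (3 * M) := by
  rw [gammaP_eq hβ2 hβ1 hM]; ring

lemma gammaP_ge (hβ2 : 1/2 ≤ β) (hβ1 : β < 1) (hM : 1 ≤ M) : 5/6 ≤ gammaP β M := by
  rw [gammaP_eq hβ2 hβ1 hM]
  have h : epsP β / (3 * M) ≤ (1/2) / 3 := by
    apply div_le_div₀ (by norm_num) (eps_le_half hβ2) (by norm_num) (by linarith)
  linarith

lemma gammaP_lt_one (hβ2 : 1/2 ≤ β) (hβ1 : β < 1) (hM : 1 ≤ M) : gammaP β M < 1 := by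
  rw [gammaP_eq hβ2 hβ1 hM]
  have : 0 < epsP β / (3 * M) := div_pos (eps_pos hβ1) (by linarith)
  linarith

lemma base_le_gammaP (hβ2 : 1/2 ≤ β) (hβ1 : β < 1) (hM : 1 ≤ M) : β ≤ gammaP β M := by
  rw [gammaP_eq hβ2 hβ1 hM]
  have h : epsP β / (3 * M) ≤ epsP β / 1 := by
    apply div_le_div_of_nonneg_left (le_of_lt (eps_pos hβ1)) one_pos (by linarith)
  simp only [epsP] at h ⊢; linarith

lemma nStar_pos : 1 ≤ nStar β M := Nat.le_add_left 1 _

lemma min_eq_third (hβ2 : 1/2 ≤ β) (hβ1 : β < 1) (hM : 1 ≤ M) :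
    min (1/2 : ℝ) (M * (1 - gammaP β M) / epsP β) = 1/3 := by
  have hε : epsP β ≠ 0 := ne_of_gt (eps_pos hβ1)
  have hM0 : M ≠ 0 := by linarith
  have : M * (1 - gammaP β M) / epsP β = 1/3 := by
    rw [one_sub_gammaP hβ2 hβ1 hM]; field_simp
  rw [this]; norm_num

lemma pow_nStar_lt (hβ2 : 1/2 ≤ β) (hβ1 : β < 1) (hM : 1 ≤ M) :
    (gammaP β M) ^ (nStar β M) < 1/3 := by
  set γ := gammaP β M with hγ
  have hγ0 : 0 < γ := by have := gammaP_ge hβ2 hβ1 hM; linarith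
  have hγ1 : γ < 1 := gammaP_lt_one hβ2 hβ1 hM
  set L := Real.logb γ (1/3) with hL
  have hfl : L < ((nStar β M : ℕ) : ℝ) := by
    rw [nStar, min_eq_third hβ2 hβ1 hM]
    push_cast
    have h1 := Int.lt_floor_add_one L
    have h2 : ((⌊L⌋ : ℤ) : ℝ) ≤ ((⌊L⌋.toNat : ℤ) : ℝ) := by exact_mod_cast Int.self_le_toNat _
    push_cast at h2 ⊢
    rw [← hL]
    linarith
  calc γ ^ (nStar β M) = γ ^ ((nStar β M : ℕ) : ℝ) := (Real.rpow_natCast _ _).symm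
    _ < γ ^ L := Real.rpow_lt_rpow_of_exponent_gt hγ0 hγ1 hfl
    _ = 1/3 := Real.rpow_logb hγ0 (ne_of_lt hγ1) (by norm_num)

lemma two_mul_lt_eps_nStar (hβ2 : 1/2 ≤ β) (hβ1 : β < 1) (hM : 1 ≤ M) :
    2 * M < epsP β * (nStar β M : ℝ) := by
  set γ := gammaP β M with hγ
  have hγ0 : (5:ℝ)/6 ≤ γ := gammaP_ge hβ2 hβ1 hM
  have hB := one_add_mul_le_pow (a := γ - 1) (by linarith) (nStar β M)
  simp only [add_sub_cancel] at hB
  have hlt := pow_nStar_lt hβ2 hβ1 hM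
  have h1 : (2:ℝ)/3 < (nStar β M : ℝ) * (1 - γ) := by nlinarith
  rw [one_sub_gammaP hβ2 hβ1 hM] at h1
  have hM0 : (0:ℝ) < M := by linarith
  have h3 : epsP β * (nStar β M : ℝ) = ((nStar β M : ℝ) * (epsP β / (3*M))) * (3*M) := by
    field_simp
  rw [h3]; nlinarith [h1]

end Helpers


section H2
variable {β M : ℝ}

lemma bP_mem (hβ2 : 1/2 ≤ β) (hβ1 : β < 1) (hM : 1 ≤ M) :
    1/2 ≤ 1 - 1 / (epsP β * (nStar β M : ℝ)) ∧ 1 - 1 / (epsP β * (nStar β M : ℝ)) < 1 := by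
  have h := two_mul_lt_eps_nStar hβ2 hβ1 hM
  have h2 : (2:ℝ) ≤ 2 * M := by linarith
  have hpos : (0:ℝ) < epsP β * (nStar β M : ℝ) := by linarith
  have hi : 1 / (epsP β * (nStar β M : ℝ)) < 1/2 := by
    rw [div_lt_div_iff₀ hpos (by norm_num)]; linarith
  have hi0 : 0 < 1 / (epsP β * (nStar β M : ℝ)) := by positivity
  constructor <;> linarith

lemma deltaP_lt_one (hβ2 : 1/2 ≤ β) (hβ1 : β < 1) (hM : 1 ≤ M) : deltaP β M < 1 := by
  have hb := bP_mem hβ2 hβ1 hM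
  have hn : (0:ℝ) < (nStar β M : ℝ) := by exact_mod_cast Nat.lt_of_lt_of_le Nat.zero_lt_one nStar_pos
  apply max_lt
  · have := gammaP_lt_one hβ2 hβ1 hM; linarith
  · exact Real.rpow_lt_one (by linarith [hb.1]) hb.2 (by positivity)

lemma le_deltaP (hβ2 : 1/2 ≤ β) (hβ1 : β < 1) (hM : 1 ≤ M) :
    (gammaP β M + 1) / 2 ≤ deltaP β M := le_max_left _ _

lemma pow_nStar_ge {α : ℝ} (hβ2 : 1/2 ≤ β) (hβ1 : β < 1) (hM : 1 ≤ M)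
    (hαδ : deltaP β M ≤ α) :
    1 - 1 / (epsP β * (nStar β M : ℝ)) ≤ α ^ (nStar β M) := by
  set b := 1 - 1 / (epsP β * (nStar β M : ℝ)) with hbdef
  have hb := bP_mem hβ2 hβ1 hM
  have hb0 : (0:ℝ) ≤ b := by rw [hbdef]; linarith [hb.1]
  have hn0 : (nStar β M : ℝ) ≠ 0 := by
    have : (1:ℕ) ≤ nStar β M := nStar_pos
    positivity
  have h1 : b ^ ((1:ℝ)/(nStar β M : ℝ)) ≤ α := le_trans (le_max_right _ _) hαδ
  have h0 : (0:ℝ) ≤ b ^ ((1:ℝ)/(nStar β M : ℝ)) := Real.rpow_nonneg hb0 _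
  calc b = (b ^ ((1:ℝ)/(nStar β M : ℝ))) ^ (nStar β M) := by
        rw [← Real.rpow_natCast (b ^ ((1:ℝ)/(nStar β M : ℝ))) (nStar β M),
          ← Real.rpow_mul hb0, one_div, inv_mul_cancel₀ hn0, Real.rpow_one]
    _ ≤ α ^ (nStar β M) := pow_le_pow_left₀ h0 h1 _

end H2

section Seq

variable {a1 : ℝ}

lemma alphaSeq_mem (ha1 : a1 ∈ Set.Ico (1/2 : ℝ) 1) :
    ∀ n, alphaSeq a1 n ∈ Set.Ico (1/2 : ℝ) 1 := by
  intro n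
  induction n with
  | zero => exact ha1
  | succ n ih =>
    have hM : (1:ℝ) ≤ (n:ℝ) + 1 := by have := Nat.cast_nonneg (α:=ℝ) n; linarith
    have h1 := gammaP_ge ih.1 ih.2 hM
    have h2 := le_deltaP ih.1 ih.2 hM
    have h3 := deltaP_lt_one ih.1 ih.2 hM
    show deltaP (alphaSeq a1 n) ((n:ℝ)+1) ∈ Set.Ico (1/2 : ℝ) 1
    exact ⟨by linarith, h3⟩

lemma alphaSeq_mono (ha1 : a1 ∈ Set.Ico (1/2 : ℝ) 1) : Monotone (alphaSeq a1) := by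
  apply monotone_nat_of_le_succ
  intro n
  have ih := alphaSeq_mem ha1 n
  have hM : (1:ℝ) ≤ (n:ℝ) + 1 := by have := Nat.cast_nonneg (α:=ℝ) n; linarith
  have h0 := base_le_gammaP ih.1 ih.2 hM
  have h1 := gammaP_lt_one ih.1 ih.2 hM
  have h2 := le_deltaP ih.1 ih.2 hM
  show alphaSeq a1 n ≤ deltaP (alphaSeq a1 n) ((n:ℝ)+1)
  linarith

lemma alphaSeq_halves (ha1 : a1 ∈ Set.Ico (1/2 : ℝ) 1) (n : ℕ) :
    1 - alphaSeq a1 (n+1) ≤ (1 - alphaSeq a1 n) / 2 := by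
  have ih := alphaSeq_mem ha1 n
  have hM : (1:ℝ) ≤ (n:ℝ) + 1 := by have := Nat.cast_nonneg (α:=ℝ) n; linarith
  have h0 := base_le_gammaP ih.1 ih.2 hM
  have h2 := le_deltaP ih.1 ih.2 hM
  have : alphaSeq a1 (n+1) = deltaP (alphaSeq a1 n) ((n:ℝ)+1) := rfl
  rw [this]
  linarith

lemma alphaSeq_lower (ha1 : a1 ∈ Set.Ico (1/2 : ℝ) 1) (n : ℕ) :
    1 - alphaSeq a1 n ≤ (1/2)^n := by
  induction n with
  | zero =>
    show 1 - a1 ≤ (1/2:ℝ)^0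
    norm_num; linarith [ha1.1]
  | succ n ih =>
    have h := alphaSeq_halves ha1 n
    calc 1 - alphaSeq a1 (n+1) ≤ (1 - alphaSeq a1 n)/2 := h
      _ ≤ (1/2)^n / 2 := by linarith
      _ = (1/2)^(n+1) := by ring

lemma alphaSeq_tendsto (ha1 : a1 ∈ Set.Ico (1/2 : ℝ) 1) :
    Tendsto (alphaSeq a1) atTop (nhdsWithin 1 (Set.Iio 1)) := by
  apply tendsto_nhdsWithin_of_tendsto_nhds_of_eventually_within
  · have hlow : Tendsto (fun n : ℕ => 1 - (1/2:ℝ)^n) atTop (nhds 1) := by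
      have := tendsto_pow_atTop_nhds_zero_of_lt_one (by norm_num : (0:ℝ) ≤ 1/2) (by norm_num)
      simpa using (tendsto_const_nhds (x := (1:ℝ))).sub this
    apply tendsto_of_tendsto_of_tendsto_of_le_of_le hlow tendsto_const_nhds
    · intro n; have := alphaSeq_lower ha1 n; dsimp; linarith
    · intro n; exact le_of_lt (alphaSeq_mem ha1 n).2
  · exact Eventually.of_forall fun n => (alphaSeq_mem ha1 n).2

lemma alphaSeq_succ_eq {n : ℕ} (hn : 1 ≤ n) :
    alphaSeq a1 n = deltaP (alphaSeq a1 (n-1)) (n : ℝ) := by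
  obtain ⟨m, rfl⟩ : ∃ m, n = m + 1 := ⟨n - 1, by omega⟩
  simp only [Nat.add_sub_cancel]
  show deltaP (alphaSeq a1 m) ((m:ℝ)+1) = _
  norm_num

end Seq


section Chain

variable {a1 : ℝ} (ha1 : a1 ∈ Set.Ico (1/2 : ℝ) 1)
include ha1

lemma epsEx_mem (n : ℕ) : epsEx a1 n ∈ Set.Ioc (0:ℝ) (1/2) := by
  have h := alphaSeq_mem ha1 (n-1)
  exact ⟨eps_pos h.2, eps_le_half h.1⟩

lemma costEx_nonneg (x : Option (ℕ × ℕ)) : 0 ≤ costEx a1 x := by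
  match x with
  | none => norm_num [costEx]
  | some (n, k) =>
    have h := epsEx_mem ha1 n
    simp only [costEx]
    split <;> [linarith [h.2]; linarith [h.1]]

lemma costEx_le_two (x : Option (ℕ × ℕ)) : costEx a1 x ≤ 2 := by
  match x with
  | none => norm_num [costEx]
  | some (n, k) =>
    have h := epsEx_mem ha1 n
    simp only [costEx]
    split <;> [linarith [h.1]; linarith [h.2]]

omit ha1 in
lemma Nex_pos (n : ℕ) : 1 ≤ Nex a1 n := nStar_pos

omit ha1 in
lemma iterate_stepEx {n k : ℕ} (hk2 : k ≤ 2 * Nex a1 n) (t : ℕ) :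
    (stepEx a1)^[t] (some (n, k)) =
      if k + t ≤ 2 * Nex a1 n then some (n, k + t) else none := by
  induction t with
  | zero => simp [hk2]
  | succ t ih =>
    rw [Function.iterate_succ_apply', ih]
    by_cases h : k + t ≤ 2 * Nex a1 n
    · rw [if_pos h]
      show (if k + t < 2 * Nex a1 n then some (n, k + t + 1) else none) = _
      by_cases h2 : k + t < 2 * Nex a1 n
      · rw [if_pos h2, if_pos (by omega), Nat.add_assoc]
      · rw [if_neg h2, if_neg (by omega)]
    · rw [if_neg h]
      show none = _
      rw [if_neg (by omega)]

lemma summable_vEx {α : ℝ} (hα0 : 0 ≤ α) (hα1 : α < 1) (x : Option (ℕ × ℕ)) :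
    Summable (fun t : ℕ => α ^ t * costEx a1 ((stepEx a1)^[t] x)) := by
  apply Summable.of_nonneg_of_le
    (fun t => mul_nonneg (pow_nonneg hα0 t) (costEx_nonneg ha1 _))
    (fun t => ?_)
  · exact (summable_geometric_of_lt_one hα0 hα1).mul_left 2
  · calc α ^ t * costEx a1 ((stepEx a1)^[t] x) ≤ α ^ t * 2 :=
        mul_le_mul_of_nonneg_left (costEx_le_two ha1 _) (pow_nonneg hα0 t)
      _ = 2 * α ^ t := by ring

lemma vEx_nonneg {α : ℝ} (hα0 : 0 ≤ α) (x : Option (ℕ × ℕ)) : 0 ≤ vEx a1 α x :=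
  tsum_nonneg fun t => mul_nonneg (pow_nonneg hα0 t) (costEx_nonneg ha1 _)

omit ha1 in
lemma vEx_none {α : ℝ} (hα0 : 0 ≤ α) (hα1 : α < 1) : vEx a1 α none = (1 - α)⁻¹ := by
  have : ∀ t : ℕ, (stepEx a1)^[t] none = none := fun t => Function.iterate_fixed rfl t
  simp only [vEx, this]
  show (∑' t : ℕ, α ^ t * 1) = (1 - α)⁻¹
  simp only [mul_one]
  exact tsum_geometric_of_lt_one hα0 hα1

omit ha1 in
lemma vEx_some {α : ℝ} (hα0 : 0 ≤ α) (hα1 : α < 1) {n k : ℕ}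
    (hk2 : k ≤ 2 * Nex a1 n) :
    vEx a1 α (some (n, k)) = (1 - α)⁻¹ +
      ∑ t ∈ Finset.range (2 * Nex a1 n - k + 1),
        α ^ t * (costEx a1 (some (n, k + t)) - 1) := by
  have hiter := iterate_stepEx (a1 := a1) (k := k) (n := n) hk2
  have key : ∀ t : ℕ, α ^ t * costEx a1 ((stepEx a1)^[t] (some (n, k)))
      = α ^ t + α ^ t * ((if k + t ≤ 2 * Nex a1 n then costEx a1 (some (n, k + t)) else 1) - 1) := by
    intro t
    rw [hiter t]
    by_cases h : k + t ≤ 2 * Nex a1 n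
    · rw [if_pos h, if_pos h]; ring
    · rw [if_neg h, if_neg h]; show α ^ t * costEx a1 none = _
      simp only [costEx]; ring
  have hg : Summable (fun t : ℕ => α ^ t) := summable_geometric_of_lt_one hα0 hα1
  have hzero : ∀ t ∉ Finset.range (2 * Nex a1 n - k + 1),
      α ^ t * ((if k + t ≤ 2 * Nex a1 n then costEx a1 (some (n, k + t)) else 1) - 1) = 0 := by
    intro t ht
    rw [Finset.mem_range, not_lt] at ht
    rw [if_neg (by omega)]
    ring
  have hs2 : Summable (fun t : ℕ =>
      α ^ t * ((if k + t ≤ 2 * Nex a1 n then costEx a1 (some (n, k + t)) else 1) - 1)) :=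
    summable_of_ne_finset_zero hzero
  calc vEx a1 α (some (n, k))
      = ∑' t : ℕ, (α ^ t + α ^ t * ((if k + t ≤ 2 * Nex a1 n then costEx a1 (some (n, k + t)) else 1) - 1)) := by
        rw [vEx]; exact tsum_congr key
    _ = (∑' t : ℕ, α ^ t) + ∑' t : ℕ,
          α ^ t * ((if k + t ≤ 2 * Nex a1 n then costEx a1 (some (n, k + t)) else 1) - 1) :=
        Summable.tsum_add hg hs2
    _ = (1 - α)⁻¹ + ∑ t ∈ Finset.range (2 * Nex a1 n - k + 1),
          α ^ t * ((if k + t ≤ 2 * Nex a1 n then costEx a1 (some (n, k + t)) else 1) - 1) := by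
        rw [tsum_geometric_of_lt_one hα0 hα1, tsum_eq_sum hzero]
    _ = (1 - α)⁻¹ + ∑ t ∈ Finset.range (2 * Nex a1 n - k + 1),
          α ^ t * (costEx a1 (some (n, k + t)) - 1) := by
        congr 1
        apply Finset.sum_congr rfl
        intro t ht
        rw [Finset.mem_range] at ht
        rw [if_pos (by omega)]

end Chain


section Bounds

variable {a1 : ℝ} (ha1 : a1 ∈ Set.Ico (1/2 : ℝ) 1)
include ha1

omit ha1 in
lemma costEx_sub_one (n j : ℕ) :
    costEx a1 (some (n, j)) - 1 =
      if j ≤ Nex a1 n then -(epsEx a1 n) else epsEx a1 n := by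
  simp only [costEx]; split <;> ring

omit ha1 in
lemma geom_sum_eq' {α : ℝ} (hα1 : α < 1) (N : ℕ) :
    ∑ t ∈ Finset.range N, α ^ t = (1 - α ^ N) / (1 - α) := by
  rw [geom_sum_eq (ne_of_lt hα1) N]
  rw [div_eq_div_iff (by intro h; apply absurd hα1; linarith [sub_eq_zero.mp h] : α - 1 ≠ 0)
    (by intro h; apply absurd hα1; linarith [sub_eq_zero.mp h] : 1 - α ≠ 0)]
  ring

omit ha1 in
lemma vEx_some_one {α : ℝ} (hα0 : 0 ≤ α) (hα1 : α < 1) (n : ℕ) :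
    vEx a1 α (some (n, 1)) = (1 - α)⁻¹ -
      epsEx a1 n * (1 - α ^ Nex a1 n) * ∑ t ∈ Finset.range (Nex a1 n), α ^ t := by
  have hN := Nex_pos (a1 := a1) (n := n)
  rw [vEx_some hα0 hα1 (by omega)]
  congr 1
  rw [show 2 * Nex a1 n - 1 + 1 = Nex a1 n + Nex a1 n by omega, Finset.sum_range_add]
  have e1 : ∀ t ∈ Finset.range (Nex a1 n),
      α ^ t * (costEx a1 (some (n, 1 + t)) - 1) = -(epsEx a1 n) * α ^ t := by
    intro t ht
    rw [Finset.mem_range] at ht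
    rw [costEx_sub_one, if_pos (by omega)]; ring
  have e2 : ∀ i ∈ Finset.range (Nex a1 n),
      α ^ (Nex a1 n + i) * (costEx a1 (some (n, 1 + (Nex a1 n + i))) - 1)
        = epsEx a1 n * α ^ Nex a1 n * α ^ i := by
    intro i hi
    rw [costEx_sub_one, if_neg (by omega), pow_add]; ring
  rw [Finset.sum_congr rfl e1, Finset.sum_congr rfl e2, ← Finset.mul_sum, ← Finset.mul_sum]
  ring

lemma D_lower {α : ℝ} (hα0 : 0 ≤ α) (hα1 : α < 1) {n k : ℕ}
    (hk1 : 1 ≤ k) (hk2 : k ≤ 2 * Nex a1 n) :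
    (1 - α)⁻¹ - epsEx a1 n * (1 - α ^ Nex a1 n) * ∑ t ∈ Finset.range (Nex a1 n), α ^ t
      ≤ vEx a1 α (some (n, k)) := by
  set N := Nex a1 n with hNdef
  set ε := epsEx a1 n with hεdef
  have hN1 : 1 ≤ N := Nex_pos n
  have hεnn : 0 ≤ ε := le_of_lt (eps_pos (alphaSeq_mem ha1 (n-1)).2)
  have hα1' : α ≤ 1 := le_of_lt hα1
  have hpowle : ∀ m : ℕ, α ^ m ≤ 1 := fun m => pow_le_one₀ hα0 hα1'
  have hSnn : (0:ℝ) ≤ ∑ t ∈ Finset.range N, α ^ t :=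
    Finset.sum_nonneg fun t _ => pow_nonneg hα0 t
  have h1αN : 0 ≤ 1 - α ^ N := by linarith [hpowle N]
  rw [vEx_some hα0 hα1 hk2]
  have main : -(ε * (1 - α ^ N) * ∑ t ∈ Finset.range N, α ^ t) ≤
      ∑ t ∈ Finset.range (2 * N - k + 1), α ^ t * (costEx a1 (some (n, k + t)) - 1) := by
    by_cases hkN : N < k
    · have hpos : (0:ℝ) ≤ ∑ t ∈ Finset.range (2 * N - k + 1),
          α ^ t * (costEx a1 (some (n, k + t)) - 1) := by
        apply Finset.sum_nonneg
        intro t ht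
        rw [costEx_sub_one, if_neg (by omega)]
        exact mul_nonneg (pow_nonneg hα0 t) hεnn
      nlinarith [mul_nonneg (mul_nonneg hεnn h1αN) hSnn]
    · push_neg at hkN
      set j := N - k + 1 with hjdef
      have hj1 : 1 ≤ j := by omega
      have hjN : j ≤ N := by omega
      rw [show 2 * N - k + 1 = j + N by omega, Finset.sum_range_add]
      have e1 : ∀ t ∈ Finset.range j,
          α ^ t * (costEx a1 (some (n, k + t)) - 1) = -(ε * α ^ t) := by
        intro t ht
        rw [Finset.mem_range] at ht
        rw [costEx_sub_one, if_pos (by omega)]; ring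
      have e2 : ∀ i ∈ Finset.range N,
          α ^ (j + i) * (costEx a1 (some (n, k + (j + i))) - 1)
            = ε * α ^ j * α ^ i := by
        intro i hi
        rw [costEx_sub_one, if_neg (by omega), pow_add]; ring
      rw [Finset.sum_congr rfl e1, Finset.sum_congr rfl e2, Finset.sum_neg_distrib,
        ← Finset.mul_sum, ← Finset.mul_sum]
      have hsub : ∑ t ∈ Finset.range j, α ^ t ≤ ∑ t ∈ Finset.range N, α ^ t :=
        Finset.sum_le_sum_of_subset_of_nonneg
          (Finset.range_subset_range.mpr hjN) (fun t _ _ => pow_nonneg hα0 t)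
      have hpow : α ^ N ≤ α ^ j := pow_le_pow_of_le_one hα0 hα1' hjN
      have h1 : ε * ∑ t ∈ Finset.range j, α ^ t ≤ ε * ∑ t ∈ Finset.range N, α ^ t :=
        mul_le_mul_of_nonneg_left hsub hεnn
      have h2 : ε * α ^ N * ∑ t ∈ Finset.range N, α ^ t
          ≤ ε * α ^ j * ∑ t ∈ Finset.range N, α ^ t := by
        apply mul_le_mul_of_nonneg_right _ hSnn
        exact mul_le_mul_of_nonneg_left hpow hεnn
      nlinarith [h1, h2]
  linarith [main]

lemma D_upper {α : ℝ} (hα0 : 0 ≤ α) (hα1 : α < 1) {n k : ℕ}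
    (hk1 : 1 ≤ k) (hk2 : k ≤ 2 * Nex a1 n) :
    vEx a1 α (some (n, k)) ≤ (1 - α)⁻¹ + 2 * (Nex a1 n : ℝ) := by
  set N := Nex a1 n with hNdef
  set ε := epsEx a1 n with hεdef
  have hε := epsEx_mem ha1 n
  rw [vEx_some hα0 hα1 hk2]
  have hbound : ∑ t ∈ Finset.range (2 * N - k + 1), α ^ t * (costEx a1 (some (n, k + t)) - 1)
      ≤ 2 * (N : ℝ) := by
    calc ∑ t ∈ Finset.range (2 * N - k + 1), α ^ t * (costEx a1 (some (n, k + t)) - 1)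
        ≤ ∑ t ∈ Finset.range (2 * N - k + 1), (1 : ℝ) := by
          apply Finset.sum_le_sum
          intro t ht
          have hc : costEx a1 (some (n, k + t)) - 1 ≤ ε := by
            rw [costEx_sub_one]; split <;> linarith [hε.1]
          have hpt : α ^ t ≤ 1 := pow_le_one₀ hα0 (le_of_lt hα1)
          have hpt0 : (0:ℝ) ≤ α ^ t := pow_nonneg hα0 t
          nlinarith [hε.2]
      _ = ((2 * N - k + 1 : ℕ) : ℝ) := by rw [Finset.sum_const, Finset.card_range]; simp
      _ ≤ 2 * (N : ℝ) := by
          have : (2 * N - k + 1 : ℕ) ≤ 2 * N := by omega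
          exact_mod_cast this
  linarith

omit ha1 in
lemma none_valid : none ∈ validEx a1 := Or.inl rfl

lemma mEx_le {α : ℝ} (hα0 : 0 ≤ α) {x : Option (ℕ × ℕ)} (hx : x ∈ validEx a1) :
    mEx a1 α ≤ vEx a1 α x := by
  apply csInf_le
  · exact ⟨0, fun y ⟨x', _, hy⟩ => hy ▸ vEx_nonneg ha1 hα0 x'⟩
  · exact ⟨x, hx, rfl⟩

omit ha1 in
lemma le_mEx {α c : ℝ} (h : ∀ x ∈ validEx a1, c ≤ vEx a1 α x) : c ≤ mEx a1 α := by
  apply le_csInf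
  · exact ⟨vEx a1 α none, none, none_valid, rfl⟩
  · rintro y ⟨x, hx, rfl⟩
    exact h x hx

lemma g_le_one (m n : ℕ) (hm : 1 ≤ m) (hn : 1 ≤ n) :
    epsEx a1 n * (1 - (alphaSeq a1 (m-1)) ^ (Nex a1 n))
      * ∑ t ∈ Finset.range (Nex a1 n), (alphaSeq a1 (m-1)) ^ t ≤ 1 := by
  set α := alphaSeq a1 (m-1) with hαdef
  set β := alphaSeq a1 (n-1) with hβdef
  set N := Nex a1 n with hNdef
  set ε := epsEx a1 n with hεdef
  have hαm := alphaSeq_mem ha1 (m-1)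
  have hβm := alphaSeq_mem ha1 (n-1)
  have hα0 : (0:ℝ) ≤ α := by linarith [hαm.1]
  have hα1 : α < 1 := hαm.2
  have hε : 0 < ε := eps_pos hβm.2
  have hεβ : ε = 1 - β := rfl
  have hM : (1:ℝ) ≤ (n:ℝ) := by exact_mod_cast hn
  have hαN1 : α ^ N ≤ 1 := pow_le_one₀ hα0 (le_of_lt hα1)
  have hαNnn : (0:ℝ) ≤ α ^ N := pow_nonneg hα0 N
  have hSnn : (0:ℝ) ≤ ∑ t ∈ Finset.range N, α ^ t :=
    Finset.sum_nonneg fun t _ => pow_nonneg hα0 t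
  have h1α : 0 < 1 - α := by linarith
  have hS : ∑ t ∈ Finset.range N, α ^ t = (1 - α ^ N) / (1 - α) := geom_sum_eq' hα1 N
  by_cases hcase : m ≤ n
  · -- ε ≤ 1 - α
    have hmono : α ≤ β := alphaSeq_mono ha1 (by omega : m - 1 ≤ n - 1)
    have hεle : ε ≤ 1 - α := by rw [hεβ]; linarith
    have h2 : ε * ∑ t ∈ Finset.range N, α ^ t ≤ 1 := by
      rw [hS, ← mul_div_assoc, div_le_one h1α]
      nlinarith [hε.le]
    nlinarith [mul_nonneg hε.le hSnn]
  · -- n < m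
    push_neg at hcase
    have hδα : deltaP β (n:ℝ) ≤ α := by
      rw [← alphaSeq_succ_eq hn, hαdef]
      exact alphaSeq_mono ha1 (by omega : n ≤ m - 1)
    have hkey : 1 - 1 / (ε * (N : ℝ)) ≤ α ^ N :=
      pow_nStar_ge hβm.1 hβm.2 hM hδα
    have hεN : 0 < ε * (N : ℝ) := by
      have h2n := two_mul_lt_eps_nStar hβm.1 hβm.2 hM
      have : (2:ℝ) ≤ 2 * (n:ℝ) := by linarith
      calc (0:ℝ) < 2 := by norm_num
        _ ≤ 2 * (n:ℝ) := this
        _ < ε * (N : ℝ) := h2n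
    have h1N : 1 - α ^ N ≤ 1 / (ε * (N : ℝ)) := by linarith [hkey]
    have hSN : ∑ t ∈ Finset.range N, α ^ t ≤ (N : ℝ) := by
      calc ∑ t ∈ Finset.range N, α ^ t ≤ ∑ t ∈ Finset.range N, (1:ℝ) :=
          Finset.sum_le_sum fun t _ => pow_le_one₀ hα0 (le_of_lt hα1)
        _ = (N : ℝ) := by rw [Finset.sum_const, Finset.card_range]; simp
    calc ε * (1 - α ^ N) * ∑ t ∈ Finset.range N, α ^ t
        ≤ ε * (1 / (ε * (N : ℝ))) * (N : ℝ) := by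
          have e1 : ε * (1 - α ^ N) ≤ ε * (1 / (ε * (N:ℝ))) :=
            mul_le_mul_of_nonneg_left h1N hε.le
          have e2 : (0:ℝ) ≤ ε * (1 / (ε * (N:ℝ))) := by positivity
          exact mul_le_mul e1 hSN hSnn e2
      _ = 1 := by field_simp; exact div_self (fun h => by rw [h, mul_zero] at hεN; exact lt_irrefl _ hεN)

end Bounds


section MainLemmas

variable {a1 : ℝ} (ha1 : a1 ∈ Set.Ico (1/2 : ℝ) 1)
include ha1

lemma part_a (n : ℕ) (hn : 1 ≤ n) :
    (n : ℝ) ≤ vEx a1 (gammaP (alphaSeq a1 (n-1)) (n:ℝ)) none -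
      mEx a1 (gammaP (alphaSeq a1 (n-1)) (n:ℝ)) := by
  set β := alphaSeq a1 (n-1) with hβdef
  set γ := gammaP β (n:ℝ) with hγdef
  have hβm := alphaSeq_mem ha1 (n-1)
  have hM : (1:ℝ) ≤ (n:ℝ) := by exact_mod_cast hn
  have hγ5 := gammaP_ge hβm.1 hβm.2 hM
  have hγ1 := gammaP_lt_one hβm.1 hβm.2 hM
  have hγ0 : (0:ℝ) ≤ γ := by rw [hγdef]; linarith
  have hN1 : 1 ≤ Nex a1 n := Nex_pos n
  have hx1 : some (n, 1) ∈ validEx a1 := Or.inr ⟨n, 1, hn, le_refl 1, by omega, rfl⟩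
  have hm := mEx_le ha1 hγ0 hx1
  have hv0 := vEx_none (a1 := a1) hγ0 hγ1
  have hv1 := vEx_some_one (a1 := a1) hγ0 hγ1 n
  set N := Nex a1 n with hNdef
  set ε := epsEx a1 n with hεdef
  set S := ∑ t ∈ Finset.range N, γ ^ t with hSdef
  have hS : S = (1 - γ ^ N) / (1 - γ) := geom_sum_eq' hγ1 N
  have hpow : γ ^ N < 1/3 := pow_nStar_lt hβm.1 hβm.2 hM
  have h1γ : 1 - γ = ε / (3 * (n:ℝ)) := one_sub_gammaP hβm.1 hβm.2 hM
  have hε : 0 < ε := eps_pos hβm.2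
  have hn3 : (0:ℝ) < 3 * (n:ℝ) := by linarith
  have hεeq : ε = 3 * (n:ℝ) * (1 - γ) := by rw [h1γ]; field_simp
  have h1γ0 : 0 < 1 - γ := by linarith
  have hkey : ε * (1 - γ ^ N) * S = 3 * (n:ℝ) * ((1 - γ ^ N) * (1 - γ ^ N)) := by
    rw [hS, hεeq]; field_simp
  have hγN0 : (0:ℝ) ≤ γ ^ N := pow_nonneg hγ0 N
  have hfinal : (n:ℝ) ≤ ε * (1 - γ ^ N) * S := by
    rw [hkey]
    have hsge : (2:ℝ)/3 ≤ 1 - γ ^ N := by linarith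
    have hsq : (2:ℝ)/3 * (2/3) ≤ (1 - γ ^ N) * (1 - γ ^ N) :=
      mul_le_mul hsge hsge (by norm_num) (by linarith)
    nlinarith [hM, hsq]
  rw [hv0]
  rw [hv1] at hm
  linarith

lemma part_d (n : ℕ) (hn : 1 ≤ n) :
    vEx a1 (alphaSeq a1 (n-1)) none - mEx a1 (alphaSeq a1 (n-1)) ≤ 1 := by
  set α := alphaSeq a1 (n-1) with hαdef
  have hαm := alphaSeq_mem ha1 (n-1)
  have hα0 : (0:ℝ) ≤ α := by rw [hαdef]; linarith [hαm.1]
  have hα1 : α < 1 := hαm.2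
  have hlow : ∀ x ∈ validEx a1, (1-α)⁻¹ - 1 ≤ vEx a1 α x := by
    rintro x (hx | ⟨n', k, hn', hk1, hk2, rfl⟩)
    · rw [Set.mem_singleton_iff] at hx; subst hx
      rw [vEx_none hα0 hα1]; linarith
    · have h1 := D_lower ha1 hα0 hα1 hk1 hk2
      have h2 := g_le_one ha1 n n' hn hn'
      linarith
  have hmm := le_mEx (a1 := a1) hlow
  rw [vEx_none hα0 hα1]
  linarith

end MainLemmas

/-- Proposition 4.2: the example chain satisfies Assumption B̲ but not
Assumption B: (a) `v_{γ^(n)}(0) − m_{γ^(n)} ≥ n` for every `n ≥ 1`, hence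
`sup_{α ∈ [0,1)} (v_α(0) − m_α) = +∞`; (b) for every state `x` of the chain,
`liminf_{α↑1} (v_α(x) − m_α) < +∞`; in particular
`v_{α^(n)}(0) − m_{α^(n)} ≤ 1` for all `n ≥ 1`.  (Here `α^(n) = alphaSeq a1 (n-1)` and
`γ^(n) = gammaP (alphaSeq a1 (n-1)) n`.) -/
theorem stmt19 (a1 : ℝ) (ha1 : a1 ∈ Set.Ico (1 / 2 : ℝ) 1) :
    (∀ n : ℕ, 1 ≤ n →
      (n : ℝ) ≤ vEx a1 (gammaP (alphaSeq a1 (n - 1)) (n : ℝ)) none -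
        mEx a1 (gammaP (alphaSeq a1 (n - 1)) (n : ℝ))) ∧
    (⨆ α : {α : ℝ // α ∈ Set.Ico (0 : ℝ) 1},
      ((vEx a1 (α : ℝ) none - mEx a1 (α : ℝ) : ℝ) : EReal)) = ⊤ ∧
    (∀ x ∈ validEx a1,
      Filter.liminf (fun α : ℝ => ((vEx a1 α x - mEx a1 α : ℝ) : EReal)) (𝓝[<] 1) < ⊤) ∧
    (∀ n : ℕ, 1 ≤ n →
      vEx a1 (alphaSeq a1 (n - 1)) none - mEx a1 (alphaSeq a1 (n - 1)) ≤ 1) := by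
  constructor
  · exact fun n hn => part_a ha1 n hn
  refine ⟨?_, ?_, fun n hn => part_d ha1 n hn⟩
  · -- supremum is ⊤
    rw [iSup_eq_top]
    intro b hb
    obtain ⟨r, hr⟩ : ∃ r : ℝ, b ≤ (r : EReal) := by
      induction b with
      | bot => exact ⟨0, bot_le⟩
      | coe x => exact ⟨x, le_refl _⟩
      | top => exact absurd hb (lt_irrefl ⊤)
    set n := ⌈r⌉₊ + 1 with hndef
    have hn : 1 ≤ n := by omega
    have hβm := alphaSeq_mem ha1 (n-1)
    have hM : (1:ℝ) ≤ (n:ℝ) := by exact_mod_cast hn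
    have hγmem : gammaP (alphaSeq a1 (n-1)) (n:ℝ) ∈ Set.Ico (0:ℝ) 1 :=
      ⟨by linarith [gammaP_ge hβm.1 hβm.2 hM], gammaP_lt_one hβm.1 hβm.2 hM⟩
    refine ⟨⟨_, hγmem⟩, ?_⟩
    have h := part_a ha1 n hn
    have hrn : r < (n:ℝ) := by
      have h1 := Nat.le_ceil r
      have h2 : ((⌈r⌉₊ : ℕ) : ℝ) < (n : ℝ) := by exact_mod_cast Nat.lt_succ_self _
      linarith
    calc b ≤ (r : EReal) := hr
      _ < ((n:ℝ) : EReal) := by exact_mod_cast hrn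
      _ ≤ _ := by exact_mod_cast h
  · -- liminf
    intro x hx
    obtain ⟨C, hC⟩ : ∃ C : ℝ, ∀ m : ℕ,
        vEx a1 (alphaSeq a1 m) x - mEx a1 (alphaSeq a1 m) ≤ C := by
      rcases hx with hx | ⟨n', k, hn', hk1, hk2, rfl⟩
      · rw [Set.mem_singleton_iff] at hx; subst hx
        refine ⟨1, fun m => ?_⟩
        have := part_d ha1 (m+1) (by omega)
        simpa using this
      · refine ⟨2 * (Nex a1 n' : ℝ) + 1, fun m => ?_⟩
        have hαm := alphaSeq_mem ha1 m
        have hα0 : (0:ℝ) ≤ alphaSeq a1 m := by linarith [hαm.1]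
        have hup := D_upper ha1 hα0 hαm.2 hk1 hk2
        have hv0 := vEx_none (a1 := a1) hα0 hαm.2
        have hpd := part_d ha1 (m+1) (by omega)
        simp only [Nat.add_sub_cancel] at hpd
        rw [hv0] at hpd
        linarith
    refine lt_of_le_of_lt (Filter.liminf_le_of_frequently_le' ?_) (EReal.coe_lt_top C)
    apply (alphaSeq_tendsto ha1).frequently
    exact Filter.Eventually.frequently
      (Filter.Eventually.of_forall fun m => EReal.coe_le_coe_iff.mpr (hC m))
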